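/- Let A be an n×n complex matrix, θ ∈ ℂ, and u ∈ ℂⁿ a unit vector. Suppose t ∈ ℂⁿ satisfies the normal equation (I−uu*)(A−θI)*(A−θI)(I−uu*)t = −(I−uu*)(A−θI)*(A−θI)u, write v = (I−uu*)t, and let u' = (u+v)/‖u+v‖ be the normalized new eigenvector approximation. Then ‖u+v‖² = 1 + ‖v‖² and ‖(A−θI)u'‖² = (‖(A−θI)u‖² − ‖(A−θI)v‖²)/(1 + ‖v‖²); in particular ‖(A−θI)u‖² − ‖(A−θI)u'‖² = (‖(A−θI)u‖²·‖v‖² + ‖(A−θI)v‖²)/(1 + ‖v‖²). -/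
import Mathlib


open scoped ComplexInnerProductSpace Matrix

/-- The action of a matrix on a vector of `EuclideanSpace ℂ (Fin n)`. -/
noncomputable def mApp {n : ℕ} (A : Matrix (Fin n) (Fin n) ℂ)
    (v : EuclideanSpace ℂ (Fin n)) : EuclideanSpace ℂ (Fin n) :=
  Matrix.toEuclideanLin A v

/-- The orthogonal projection `(I - uu*) t = t - ⟪u, t⟫ u` onto the orthogonal
complement of the unit vector `u`. -/
noncomputable def proj {n : ℕ} (u t : EuclideanSpace ℂ (Fin n)) :
    EuclideanSpace ℂ (Fin n) :=
  t - ⟪u, t⟫ • u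

lemma mApp_mul {n : ℕ} (A B : Matrix (Fin n) (Fin n) ℂ)
    (x : EuclideanSpace ℂ (Fin n)) : mApp (A * B) x = mApp A (mApp B x) := by
  simp [mApp, Matrix.toEuclideanLin_apply, Matrix.mulVec_mulVec]

lemma mApp_add {n : ℕ} (A : Matrix (Fin n) (Fin n) ℂ)
    (x y : EuclideanSpace ℂ (Fin n)) : mApp A (x + y) = mApp A x + mApp A y := by
  simp [mApp]

lemma inner_mApp_conjTranspose {n : ℕ} (A : Matrix (Fin n) (Fin n) ℂ)
    (x y : EuclideanSpace ℂ (Fin n)) : ⟪x, mApp Aᴴ y⟫ = ⟪mApp A x, y⟫ := by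
  rw [mApp, mApp, Matrix.toEuclideanLin_conjTranspose_eq_adjoint,
    LinearMap.adjoint_inner_right]

theorem stmt10 {n : ℕ} (A : Matrix (Fin n) (Fin n) ℂ) (θ : ℂ)
    (u : EuclideanSpace ℂ (Fin n)) (hu : ‖u‖ = 1) (t : EuclideanSpace ℂ (Fin n))
    (hnormal : proj u (mApp ((A - θ • 1)ᴴ * (A - θ • 1)) (proj u t)) =
      -proj u (mApp ((A - θ • 1)ᴴ * (A - θ • 1)) u))
    (v : EuclideanSpace ℂ (Fin n)) (hv : v = proj u t)
    (u' : EuclideanSpace ℂ (Fin n)) (hu' : u' = ‖u + v‖⁻¹ • (u + v)) :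
    ‖u + v‖ ^ 2 = 1 + ‖v‖ ^ 2 ∧
    ‖mApp (A - θ • 1) u'‖ ^ 2 =
      (‖mApp (A - θ • 1) u‖ ^ 2 - ‖mApp (A - θ • 1) v‖ ^ 2) / (1 + ‖v‖ ^ 2) ∧
    ‖mApp (A - θ • 1) u‖ ^ 2 - ‖mApp (A - θ • 1) u'‖ ^ 2 =
      (‖mApp (A - θ • 1) u‖ ^ 2 * ‖v‖ ^ 2 + ‖mApp (A - θ • 1) v‖ ^ 2) /
        (1 + ‖v‖ ^ 2) := by
  set B := A - θ • 1 with hB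
  have huu : ⟪u, u⟫ = 1 := by
    rw [inner_self_eq_norm_sq_to_K, hu]; norm_num
  have huv : ⟪u, v⟫ = 0 := by
    rw [hv, proj, inner_sub_right, inner_smul_right, huu, mul_one, sub_self]
  -- M(u+v) is a multiple of u
  have hM : mApp (Bᴴ * B) (u + v) = ⟪u, mApp (Bᴴ * B) (u + v)⟫ • u := by
    have h0 : proj u (mApp (Bᴴ * B) (u + v)) = 0 := by
      rw [mApp_add]
      have : proj u (mApp (Bᴴ * B) u + mApp (Bᴴ * B) v) =
          proj u (mApp (Bᴴ * B) u) + proj u (mApp (Bᴴ * B) v) := by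
        simp only [proj, inner_add_right, add_smul]
        abel
      rw [this, hv, hnormal]
      abel
    have := h0
    rw [proj, sub_eq_zero] at this
    exact this
  have hkey : ⟪mApp B v, mApp B (u + v)⟫ = 0 := by
    have : ⟪v, mApp (Bᴴ * B) (u + v)⟫ = 0 := by
      have hvu : ⟪v, u⟫ = 0 := by rw [← inner_conj_symm, huv]; simp
      rw [hM, inner_smul_right, hvu, mul_zero]
    rwa [mApp_mul, inner_mApp_conjTranspose] at this
  have hBuv : ⟪mApp B v, mApp B u⟫ = -(‖mApp B v‖ : ℂ) ^ 2 := by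
    have := hkey
    rw [mApp_add, inner_add_right, inner_self_eq_norm_sq_to_K] at this
    exact eq_neg_of_add_eq_zero_left this
  have h1 : ‖u + v‖ ^ 2 = 1 + ‖v‖ ^ 2 := by
    rw [@norm_add_sq ℂ, hu, huv]
    simp
  have hpos : (0 : ℝ) < 1 + ‖v‖ ^ 2 := by positivity
  have h2 : ‖mApp B (u + v)‖ ^ 2 = ‖mApp B u‖ ^ 2 - ‖mApp B v‖ ^ 2 := by
    rw [mApp_add, @norm_add_sq ℂ]
    have : ⟪mApp B u, mApp B v⟫ = -(‖mApp B v‖ : ℂ) ^ 2 := by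
      rw [← inner_conj_symm, hBuv]
      simp
    rw [this]
    simp [← Complex.ofReal_pow]
    ring
  have hsmul : mApp B u' = ‖u + v‖⁻¹ • mApp B (u + v) := by
    rw [hu', mApp]
    exact LinearMap.map_smul_of_tower (Matrix.toEuclideanLin B) _ _
  have hnorm' : ‖mApp B u'‖ ^ 2 = (‖mApp B u‖ ^ 2 - ‖mApp B v‖ ^ 2) / (1 + ‖v‖ ^ 2) := by
    rw [hsmul, norm_smul, mul_pow, ← h2, ← h1]
    have hne : ‖u + v‖ ≠ 0 := by
      intro h
      rw [h] at h1
      nlinarith [sq_nonneg (‖v‖)]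
    rw [norm_inv, norm_norm]
    field_simp
  refine ⟨h1, hnorm', ?_⟩
  rw [hnorm']
  field_simp
  ring
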